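/- Let λ ∈ YD_{n,n+1} be a balanced Young diagram of rank s with |λ| = 2t. Then the cohomological degree predicted by the Borel–Bott–Weil theorem equals t; that is, the number of negative terms of -λ + ρ plus the number of pairs 1 ≤ i < j ≤ n with (-λ+ρ)_i + (-λ+ρ)_j < 0 equals s(s+1)/2 + |λ^b| = |λ|/2, where λ^b = (λ_{s+1},...,λ_n). -/

import Mathlib

/-- A Young diagram is encoded (0-indexed) by its weakly decreasing sequence of
row lengths `l : ℕ → ℕ` which is eventually zero.  The transposed (conjugate)
diagram: `(λᵀ)_i = #{j : λ_j ≥ i}`. -/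
noncomputable def conj (l : ℕ → ℕ) : ℕ → ℕ := fun i => Nat.card {j : ℕ // i + 1 ≤ l j}

/-- The rank of a diagram (size of its Durfee square): the number of diagonal
boxes, i.e. the largest `s` with `λ_s ≥ s` (1-indexed). -/
noncomputable def rank (l : ℕ → ℕ) : ℕ := Nat.card {i : ℕ // i + 1 ≤ l i}

/-- Arm lengths (Frobenius coordinates): `a_i = λ_i - (i - 1)` (1-indexed),
i.e. `l i - i` (0-indexed). -/
def arm (l : ℕ → ℕ) (i : ℕ) : ℕ := l i - i

/-- Leg lengths (Frobenius coordinates): `b_i = (λᵀ)_i - (i - 1)` (1-indexed). -/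
noncomputable def leg (l : ℕ → ℕ) (i : ℕ) : ℕ := conj l i - i

/-- A Young diagram is balanced if its Frobenius coordinates satisfy
`a_i = b_i + 1` for all `i`. -/
def BalancedDiagram (l : ℕ → ℕ) : Prop := ∀ i, i < rank l → arm l i = leg l i + 1



open Finset

lemma dcFinset (F : Finset ℕ) (h : ∀ j ∈ F, ∀ k, k < j → k ∈ F) :
    F = Finset.range F.card := by
  have hsub : F ⊆ Finset.range F.card := by
    intro j hj
    rw [Finset.mem_range]
    by_contra hge
    push_neg at hge
    have hss : Finset.range (j + 1) ⊆ F := by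
      intro k hk
      rw [Finset.mem_range] at hk
      rcases Nat.lt_succ_iff_lt_or_eq.mp hk with h' | h'
      · exact h j hj k h'
      · exact h' ▸ hj
    have := Finset.card_le_card hss
    rw [Finset.card_range] at this
    omega
  exact Finset.eq_of_subset_of_card_le hsub (by simp)

lemma seg (n : ℕ) (P : ℕ → Prop) [DecidablePred P]
    (hbd : ∀ j, P j → j < n) (hdc : ∀ j, P j → ∀ k, k < j → P k) :
    ∀ j, P j ↔ j < Nat.card {j : ℕ // P j} := by
  have hset : {j : ℕ | P j} = ↑((Finset.range n).filter P) := by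
    ext j
    simp only [Set.mem_setOf_eq, coe_filter, Finset.mem_range]
    exact ⟨fun h => ⟨hbd j h, h⟩, fun h => h.2⟩
  have hcard : Nat.card {j : ℕ // P j} = ((Finset.range n).filter P).card := by
    rw [show {j : ℕ // P j} = ↥{j : ℕ | P j} from rfl, Nat.card_coe_set_eq, hset,
      Set.ncard_coe_finset]
  have hF := dcFinset ((Finset.range n).filter P) (by
    intro j hj k hk
    rw [Finset.mem_filter, Finset.mem_range] at hj ⊢
    exact ⟨hk.trans hj.1, hdc j hj.2 k hk⟩)
  intro j
  rw [hcard]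
  constructor
  · intro h
    have : j ∈ (Finset.range n).filter P := by
      rw [Finset.mem_filter, Finset.mem_range]; exact ⟨hbd j h, h⟩
    rw [hF, Finset.mem_range] at this; exact this
  · intro h
    have : j ∈ (Finset.range n).filter P := by rw [hF, Finset.mem_range]; exact h
    exact (Finset.mem_filter.mp this).2

section main
variable (n : ℕ) (l : ℕ → ℕ) (hl : Antitone l) (hh : ∀ i, n ≤ i → l i = 0)

include hl hh

lemma hrank : ∀ i, i + 1 ≤ l i ↔ i < rank l := by
  have := seg n (fun i => i + 1 ≤ l i)
    (fun j hj => by by_contra h; push_neg at h; simp only [hh j h] at hj; omega)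
    (fun j hj k hk => le_trans (by omega) (le_trans hj (hl hk.le)))
  exact this

lemma hconj : ∀ i j, i + 1 ≤ l j ↔ j < conj l i := by
  intro i
  have := seg n (fun j => i + 1 ≤ l j)
    (fun j hj => by by_contra h; push_neg at h; simp only [hh j h] at hj; omega)
    (fun j hj k hk => le_trans hj (hl hk.le))
  exact this

lemma hsn : rank l ≤ n := by
  by_contra h
  push_neg at h
  have := (hrank n l hl hh n).mpr h
  rw [hh n le_rfl] at this
  omega

lemma hls : ∀ j, rank l ≤ j → l j ≤ j := by
  intro j hj
  by_contra h
  push_neg at h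
  have := (hrank n l hl hh j).mp h
  omega

lemma hconjge (hb : BalancedDiagram l) : ∀ i, i < rank l → rank l ≤ conj l i := by
  intro i hi
  have h1 : rank l - 1 + 1 ≤ l (rank l - 1) := (hrank n l hl hh _).mpr (by omega)
  have h2 : i + 1 ≤ l (rank l - 1) := by omega
  have := (hconj n l hl hh i (rank l - 1)).mp h2
  omega

lemma hbal (hb : BalancedDiagram l) : ∀ i, i < rank l → l i = conj l i + 1 := by
  intro i hi
  have h1 := hb i hi
  unfold arm leg at h1
  have h2 : i + 1 ≤ l i := (hrank n l hl hh i).mpr hi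
  have h3 := hconjge n l hl hh hb i hi
  omega

lemma hlge (hb : BalancedDiagram l) : ∀ i, i < rank l → rank l + 1 ≤ l i := by
  intro i hi
  have := hbal n l hl hh hb i hi
  have := hconjge n l hl hh hb i hi
  omega

lemma hKEY (hb : BalancedDiagram l) : ∀ j, rank l ≤ j → j < n →
    ∀ i, (i < j ∧ i + j + 3 ≤ l i + l j) ↔ i < l j := by
  intro j hj hjn i
  have hlj : l j ≤ j := hls n l hl hh j hj
  have hljs : l j ≤ rank l := le_trans (hl hj) (hls n l hl hh _ le_rfl)
  constructor
  · rintro ⟨hij, hsum⟩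
    by_contra h
    push_neg at h
    have hi2 : i + 1 ≤ l i := by omega
    have his : i < rank l := (hrank n l hl hh i).mp hi2
    have hbi := hbal n l hl hh hb i his
    have hq : i + j + 1 - l j < conj l i := by omega
    have h5 := (hconj n l hl hh i (i + j + 1 - l j)).mpr hq
    have h6 : l (i + j + 1 - l j) ≤ l j := hl (by omega)
    omega
  · intro hi
    have his : i < rank l := by omega
    have hbi := hbal n l hl hh hb i his
    have hq : i + 1 ≤ l (i + j + 1 - l j) := by
      have h7 : l j ≤ l (i + j + 1 - l j) := hl (by omega)
      omega
    have h8 := (hconj n l hl hh i (i + j + 1 - l j)).mp hq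
    constructor
    · omega
    · omega

end main

/-- For a balanced `λ ∈ YD_{n,n+1}` of rank `s` with `|λ| = 2t`,
the Borel–Bott–Weil degree — the number of negative terms of `-λ + ρ` plus the
number of pairs of terms with negative sum — equals `s(s+1)/2 + |λᵇ|`, which
equals `t`.  (The terms of `-λ + ρ` are `(i+1) - λ_{i+1}`, `0 ≤ i < n`.) -/
theorem stmt15 (n t : ℕ) (l : ℕ → ℕ) (hl : Antitone l) (hw : ∀ i, l i ≤ n + 1)
    (hh : ∀ i, n ≤ i → l i = 0) (hb : BalancedDiagram l)
    (ht : ∑ i ∈ Finset.range n, l i = 2 * t) :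
    ((Finset.range n).filter (fun i : ℕ => ((i : ℤ) + 1 - l i) < 0)).card
      + (((Finset.range n ×ˢ Finset.range n).filter
          (fun p : ℕ × ℕ => p.1 < p.2 ∧
            ((p.1 : ℤ) + 1 - l p.1) + ((p.2 : ℤ) + 1 - l p.2) < 0)).card)
      = rank l * (rank l + 1) / 2 + ∑ i ∈ Finset.range n, l (rank l + i) ∧
    rank l * (rank l + 1) / 2 + ∑ i ∈ Finset.range n, l (rank l + i) = t := by
  set s := rank l with hsdef
  have hr := hrank n l hl hh
  have hc := hconj n l hl hh
  have hsn' := hsn n l hl hh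
  have hls' := hls n l hl hh
  have hbal' := hbal n l hl hh hb
  have hlge' := hlge n l hl hh hb
  have hkey := hKEY n l hl hh hb
  -- Part A
  have hA : (Finset.range n).filter (fun i : ℕ => ((i : ℤ) + 1 - l i) < 0)
      = Finset.range s := by
    ext i
    simp only [Finset.mem_filter, Finset.mem_range]
    constructor
    · rintro ⟨hin, hneg⟩
      exact (hr i).mp (by omega)
    · intro hi
      have h1 := hlge' i hi
      exact ⟨lt_of_lt_of_le hi hsn', by omega⟩
  -- Part B: rewrite the predicate
  have hB1 : (Finset.range n ×ˢ Finset.range n).filter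
          (fun p : ℕ × ℕ => p.1 < p.2 ∧
            ((p.1 : ℤ) + 1 - l p.1) + ((p.2 : ℤ) + 1 - l p.2) < 0)
      = (Finset.range n ×ˢ Finset.range n).filter
          (fun p : ℕ × ℕ => (p.2 < s ∧ p.1 < p.2) ∨ (s ≤ p.2 ∧ p.1 < l p.2)) := by
    apply Finset.filter_congr
    rintro ⟨i, j⟩ hp
    simp only [Finset.mem_product, Finset.mem_range] at hp
    obtain ⟨hin, hjn⟩ := hp
    simp only
    by_cases hjs : j < s
    · constructor
      · rintro ⟨hij, _⟩; exact Or.inl ⟨hjs, hij⟩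
      · rintro (⟨_, hij⟩ | ⟨hsj, _⟩)
        · have h1 := hlge' i (hij.trans hjs)
          have h2 := hlge' j hjs
          exact ⟨hij, by omega⟩
        · omega
    · push_neg at hjs
      have hk := hkey j hjs hjn i
      constructor
      · rintro ⟨hij, hneg⟩
        exact Or.inr ⟨hjs, hk.mp ⟨hij, by omega⟩⟩
      · rintro (⟨h', _⟩ | ⟨_, hij⟩)
        · omega
        · obtain ⟨h1, h2⟩ := hk.mpr hij
          exact ⟨h1, by omega⟩
  -- fiberwise count
  have hB2 : ((Finset.range n ×ˢ Finset.range n).filter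
          (fun p : ℕ × ℕ => (p.2 < s ∧ p.1 < p.2) ∨ (s ≤ p.2 ∧ p.1 < l p.2))).card
      = ∑ j ∈ Finset.range n, (if j < s then j else l j) := by
    rw [Finset.card_eq_sum_card_fiberwise
      (f := Prod.snd) (t := Finset.range n)
      (fun p hp => (Finset.mem_product.mp (Finset.mem_filter.mp hp).1).2)]
    refine Finset.sum_congr rfl fun j hj => ?_
    rw [Finset.mem_range] at hj
    have hfib : ((Finset.range n ×ˢ Finset.range n).filter
          (fun p : ℕ × ℕ => (p.2 < s ∧ p.1 < p.2) ∨ (s ≤ p.2 ∧ p.1 < l p.2))).filter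
          (fun p => p.2 = j)
        = Finset.range (if j < s then j else l j) ×ˢ {j} := by
      ext ⟨a, b⟩
      simp only [Finset.mem_filter, Finset.mem_product, Finset.mem_range,
        Finset.mem_singleton]
      constructor
      · rintro ⟨⟨⟨han, hbn⟩, hC⟩, hbj⟩
        subst hbj
        refine ⟨?_, rfl⟩
        rcases hC with ⟨h1, h2⟩ | ⟨h1, h2⟩
        · simp only [if_pos h1]; exact h2
        · simp only [if_neg (by omega : ¬ b < s)]; exact h2
      · rintro ⟨ha, hbj⟩
        subst hbj
        by_cases hjs : b < s
        · rw [if_pos hjs] at ha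
          exact ⟨⟨⟨by omega, hj⟩, Or.inl ⟨hjs, ha⟩⟩, rfl⟩
        · rw [if_neg hjs] at ha
          push_neg at hjs
          have : l b ≤ b := hls' b hjs
          exact ⟨⟨⟨by omega, hj⟩, Or.inr ⟨hjs, ha⟩⟩, rfl⟩
    rw [hfib, Finset.card_product, Finset.card_range, Finset.card_singleton, mul_one]
  -- sum splitting helpers
  have hsplit : ∀ f : ℕ → ℕ, ∑ j ∈ Finset.range n, f j
      = ∑ j ∈ Finset.range s, f j + ∑ j ∈ Finset.Ico s n, f j := by
    intro f
    rw [Finset.range_eq_Ico, ← Finset.sum_Ico_consecutive f (Nat.zero_le s) hsn',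
      ← Finset.range_eq_Ico]
  have hIco : ∑ j ∈ Finset.Ico s n, l j = ∑ i ∈ Finset.range n, l (s + i) := by
    rw [Finset.sum_Ico_eq_sum_range]
    apply Finset.sum_subset (Finset.range_subset_range.mpr (by omega))
    intro x _ hnx
    rw [Finset.mem_range] at hnx
    exact hh _ (by omega)
  -- Gauss
  have h1 := Finset.sum_range_id_mul_two (s + 1)
  rw [Finset.sum_range_succ] at h1
  simp only [Nat.add_sub_cancel] at h1
  have hGauss : s * (s + 1) / 2 = (∑ j ∈ Finset.range s, j) + s :=
    Nat.div_eq_of_eq_mul_left (by norm_num) (by rw [h1]; ring)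
  have hite : ∑ j ∈ Finset.range n, (if j < s then j else l j)
      = (∑ j ∈ Finset.range s, j) + ∑ j ∈ Finset.Ico s n, l j := by
    rw [hsplit (fun j => if j < s then j else l j)]
    congr 1
    · exact Finset.sum_congr rfl fun j hj => if_pos (Finset.mem_range.mp hj)
    · exact Finset.sum_congr rfl fun j hj => if_neg (by
        have := (Finset.mem_Ico.mp hj).1; omega)
  -- column sums
  have hconjn : ∀ i, conj l i ≤ n := by
    intro i
    by_contra h
    push_neg at h
    have := (hc i n).mpr h
    simp only [hh n le_rfl] at this
    omega
  have hfilt : ∀ i, (Finset.range n).filter (fun k => i + 1 ≤ l k)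
      = Finset.range (conj l i) := by
    intro i
    ext k
    simp only [Finset.mem_filter, Finset.mem_range]
    exact ⟨fun h => (hc i k).mp h.2,
      fun h => ⟨lt_of_lt_of_le h (hconjn i), (hc i k).mpr h⟩⟩
  have hcol : ∑ i ∈ Finset.range s, conj l i
      = s * s + ∑ j ∈ Finset.Ico s n, l j := by
    have e1 : ∀ i, conj l i = ∑ k ∈ Finset.range n, if i + 1 ≤ l k then 1 else 0 := by
      intro i
      rw [← Finset.card_range (conj l i), ← hfilt i]
      exact Finset.card_filter _ _
    calc ∑ i ∈ Finset.range s, conj l i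
        = ∑ i ∈ Finset.range s, ∑ k ∈ Finset.range n, if i + 1 ≤ l k then 1 else 0 :=
          Finset.sum_congr rfl fun i _ => e1 i
      _ = ∑ k ∈ Finset.range n, ∑ i ∈ Finset.range s, if i + 1 ≤ l k then 1 else 0 :=
          Finset.sum_comm
      _ = ∑ k ∈ Finset.range n, min (l k) s := by
          refine Finset.sum_congr rfl fun k _ => ?_
          rw [show (∑ i ∈ Finset.range s, if i + 1 ≤ l k then 1 else 0)
              = ((Finset.range s).filter (fun i => i + 1 ≤ l k)).card from
            (Finset.card_filter _ _).symm]
          rw [show (Finset.range s).filter (fun i => i + 1 ≤ l k)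
              = Finset.range (min (l k) s) by
            ext i; simp only [Finset.mem_filter, Finset.mem_range]; omega]
          exact Finset.card_range _
      _ = s * s + ∑ j ∈ Finset.Ico s n, l j := by
          rw [hsplit (fun k => min (l k) s)]
          have c1 : ∑ k ∈ Finset.range s, min (l k) s = s * s := by
            rw [Finset.sum_congr rfl (fun k hk => show min (l k) s = s by
              have := hlge' k (Finset.mem_range.mp hk); omega)]
            simp [Finset.sum_const, Finset.card_range, smul_eq_mul]
          have c2 : ∑ k ∈ Finset.Ico s n, min (l k) s = ∑ k ∈ Finset.Ico s n, l k := by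
            refine Finset.sum_congr rfl fun k hk => ?_
            have hks := (Finset.mem_Ico.mp hk).1
            have : l k ≤ s := le_trans (hl hks) (hls' s le_rfl)
            omega
          rw [c1, c2]
  have hrow : ∑ i ∈ Finset.range s, l i = (∑ i ∈ Finset.range s, conj l i) + s := by
    rw [Finset.sum_congr rfl (fun i hi => hbal' i (Finset.mem_range.mp hi)),
      Finset.sum_add_distrib, Finset.sum_const, Finset.card_range, smul_eq_mul, mul_one]
  have htot := hsplit l
  rw [ht, hrow, hcol] at htot
  have h2 : ((∑ j ∈ Finset.range s, j) + s) * 2 = s * s + s := by rw [h1]; ring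
  constructor
  · rw [hA, Finset.card_range, hB1, hB2, hite, hIco, hGauss]
    omega
  · rw [hGauss, ← hIco]
    generalize s * s = q at h2 htot
    omega
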